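/- Suppose the feature matrix M (with m ≥ 2 rows) has two rows i₀ ≠ i₁ all of whose entries lie in {−1,+1} and which are entrywise complements: M_{i₁,j} = −M_{i₀,j} for all j. Then for any target loss L* and any T, if L(λ^T) ≤ L* then T ≥ inf{‖λ‖₁ : λ ∈ ℝ^N, L(λ) ≤ L*}/(2·ln m); i.e., the number of AdaBoost rounds required to achieve loss at most L* is at least the ℓ₁-norm of the smallest combination achieving that loss, divided by 2·ln m. -/

import Mathlib

/-- The exponential loss `L(λ) = (1/m) ∑ᵢ exp(−(Mλ)ᵢ)`. -/
noncomputable def expLoss {m N : ℕ} (M : Matrix (Fin m) (Fin N) ℝ) (lam : Fin N → ℝ) : ℝ :=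
  (1 / (m : ℝ)) * ∑ i, Real.exp (-(M.mulVec lam i))

/-- AdaBoost's distribution `D(i) ∝ exp(−(Mλ)ᵢ)`. -/
noncomputable def wt {m N : ℕ} (M : Matrix (Fin m) (Fin N) ℝ) (lam : Fin N → ℝ) (i : Fin m) : ℝ :=
  Real.exp (-(M.mulVec lam i)) / ∑ i', Real.exp (-(M.mulVec lam i'))

/-- The ℓ₁-norm on `ℝ^N`. -/
noncomputable def l1 {N : ℕ} (v : Fin N → ℝ) : ℝ := ∑ j, |v j|

lemma l1_nonneg {N : ℕ} (v : Fin N → ℝ) : 0 ≤ l1 v :=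
  Finset.sum_nonneg fun _ _ => abs_nonneg _

lemma l1_add_single {N : ℕ} (u : Fin N → ℝ) (k : Fin N) (a : ℝ) :
    l1 (u + Pi.single k a) ≤ l1 u + |a| := by
  have habs : ∀ jj : Fin N, |(Pi.single k a : Fin N → ℝ) jj| = (Pi.single k |a| : Fin N → ℝ) jj := by
    intro jj
    rcases eq_or_ne jj k with h | h
    · subst h; simp
    · simp [Pi.single_eq_of_ne h]
  refine le_trans (Finset.sum_le_sum
    (fun jj _ => abs_add_le (u jj) ((Pi.single k a : Fin N → ℝ) jj))) ?_
  rw [Finset.sum_add_distrib]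
  unfold l1
  simp [habs, Finset.sum_pi_single']

lemma alpha_abs_le {m N : ℕ} (hm : 2 ≤ m) (M : Matrix (Fin m) (Fin N) ℝ)
    (hM : ∀ i jj, |M i jj| ≤ 1)
    (i₀ i₁ : Fin m) (hne : i₀ ≠ i₁)
    (hpm : ∀ jj, M i₀ jj = 1 ∨ M i₀ jj = -1)
    (hcomp : ∀ jj, M i₁ jj = -M i₀ jj)
    (lamv : Fin N → ℝ) (hloss : expLoss M lamv ≤ 1) (k : Fin N) :
    |(1/2 : ℝ) * Real.log ((1 + ∑ i, wt M lamv i * M i k) /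
        (1 - ∑ i, wt M lamv i * M i k))| ≤ Real.log m := by
  have hm2 : (2:ℝ) ≤ m := by exact_mod_cast hm
  have hm0 : (0:ℝ) < m := by linarith
  set S : ℝ := ∑ i', Real.exp (-(M.mulVec lamv i')) with hS
  have hSpos : 0 < S := Finset.sum_pos (fun _ _ => Real.exp_pos _) ⟨i₀, Finset.mem_univ _⟩
  have hSm : S ≤ m := by
    unfold expLoss at hloss
    rw [one_div, inv_mul_eq_div, div_le_one hm0] at hloss
    exact hloss
  set a : ℝ := M.mulVec lamv i₀ with haa
  have ha1 : M.mulVec lamv i₁ = -a := by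
    rw [haa]
    simp only [Matrix.mulVec, dotProduct]
    rw [← Finset.sum_neg_distrib]
    exact Finset.sum_congr rfl fun jj _ => by rw [hcomp jj]; ring
  have hpair : Real.exp (-a) + Real.exp a ≤ S := by
    have h := Finset.sum_le_sum_of_subset_of_nonneg
      (Finset.subset_univ ({i₀, i₁} : Finset (Fin m)))
      (fun i _ _ => (Real.exp_pos (-(M.mulVec lamv i))).le)
    rw [Finset.sum_pair hne, ha1, neg_neg] at h
    exact h
  have hexpabs : Real.exp |a| ≤ m := by
    rcases abs_cases a with ⟨h, _⟩ | ⟨h, _⟩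
    · rw [h]; linarith [Real.exp_pos (-a)]
    · rw [h]; linarith [Real.exp_pos a]
  have hprod : Real.exp |a| * Real.exp (-|a|) = 1 := by
    rw [← Real.exp_add]; simp
  have hinv : (1:ℝ)/m ≤ Real.exp (-|a|) := by
    rw [div_le_iff₀ hm0]
    nlinarith [Real.exp_pos (-|a|), Real.exp_pos |a|]
  have hmulm : (1/(m:ℝ)^2) * m = 1/m := by field_simp
  have key : ∀ x : ℝ, Real.exp (-|a|) ≤ x → 1/(m:ℝ)^2 ≤ x / S := by
    intro x hx
    rw [le_div_iff₀ hSpos]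
    have h1 : (1/(m:ℝ)^2) * S ≤ (1/(m:ℝ)^2) * m :=
      mul_le_mul_of_nonneg_left hSm (by positivity)
    linarith
  have hD0 : 1/(m:ℝ)^2 ≤ wt M lamv i₀ := by
    unfold wt
    exact key _ (Real.exp_le_exp.mpr (neg_le_neg (le_abs_self a)))
  have hD1 : 1/(m:ℝ)^2 ≤ wt M lamv i₁ := by
    unfold wt
    rw [ha1, neg_neg]
    exact key _ (Real.exp_le_exp.mpr (neg_abs_le a))
  have hDnn : ∀ i, 0 ≤ wt M lamv i := fun i =>
    div_nonneg (Real.exp_pos _).le hSpos.le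
  have hsum1 : ∑ i, wt M lamv i = 1 := by
    unfold wt
    rw [← Finset.sum_div]
    exact div_self hSpos.ne'
  set rr : ℝ := ∑ i, wt M lamv i * M i k with hrr
  have hsplit : rr = (∑ i ∈ Finset.univ \ {i₀, i₁}, wt M lamv i * M i k) +
      (wt M lamv i₀ * M i₀ k + wt M lamv i₁ * M i₁ k) := by
    rw [hrr, ← Finset.sum_sdiff (Finset.subset_univ ({i₀, i₁} : Finset (Fin m))),
      Finset.sum_pair hne]
  have hrestsum : ∑ i ∈ Finset.univ \ {i₀, i₁}, wt M lamv i
      = 1 - (wt M lamv i₀ + wt M lamv i₁) := by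
    rw [Finset.sum_sdiff_eq_sub (Finset.subset_univ _), hsum1, Finset.sum_pair hne]
  have hrest : |∑ i ∈ Finset.univ \ {i₀, i₁}, wt M lamv i * M i k|
      ≤ 1 - wt M lamv i₀ - wt M lamv i₁ := by
    refine le_trans (Finset.abs_sum_le_sum_abs _ _) ?_
    have hterm : ∀ i ∈ Finset.univ \ ({i₀, i₁} : Finset (Fin m)),
        |wt M lamv i * M i k| ≤ wt M lamv i := by
      intro i _
      rw [abs_mul, abs_of_nonneg (hDnn i)]
      exact mul_le_of_le_one_right (hDnn i) (hM i k)
    refine le_trans (Finset.sum_le_sum hterm) ?_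
    rw [hrestsum]; linarith
  have hM0 : |M i₀ k| = 1 := by rcases hpm k with h | h <;> simp [h]
  have hcross : wt M lamv i₀ * M i₀ k + wt M lamv i₁ * M i₁ k
      = (wt M lamv i₀ - wt M lamv i₁) * M i₀ k := by rw [hcomp k]; ring
  have h2m : (2:ℝ)/(m:ℝ)^2 = 2 * (1/(m:ℝ)^2) := by ring
  have habsdiff : |(wt M lamv i₀ - wt M lamv i₁) * M i₀ k|
      ≤ wt M lamv i₀ + wt M lamv i₁ - 2/(m:ℝ)^2 := by
    rw [abs_mul, hM0, mul_one]
    rcases abs_cases (wt M lamv i₀ - wt M lamv i₁) with ⟨h, _⟩ | ⟨h, _⟩ <;>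
      rw [h] <;> rw [h2m] <;> linarith
  have hrb : |rr| ≤ 1 - 2/(m:ℝ)^2 := by
    calc |rr| ≤ |∑ i ∈ Finset.univ \ {i₀, i₁}, wt M lamv i * M i k|
        + |wt M lamv i₀ * M i₀ k + wt M lamv i₁ * M i₁ k| := by
          rw [hsplit]; exact abs_add_le _ _
      _ ≤ (1 - wt M lamv i₀ - wt M lamv i₁)
          + (wt M lamv i₀ + wt M lamv i₁ - 2/(m:ℝ)^2) := by
          rw [hcross]; exact add_le_add hrest habsdiff
      _ = 1 - 2/(m:ℝ)^2 := by ring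
  have hc : (0:ℝ) < 2/(m:ℝ)^2 := by positivity
  obtain ⟨hrlo, hrhi⟩ := abs_le.mp hrb
  have h1mr : 0 < 1 - rr := by linarith
  have h1pr : 0 < 1 + rr := by linarith
  have hupper : (1 + rr)/(1 - rr) ≤ (m:ℝ)^2 := by
    rw [div_le_iff₀ h1mr]
    have h1 : (m:ℝ)^2 * (2/(m:ℝ)^2) ≤ (m:ℝ)^2 * (1 - rr) :=
      mul_le_mul_of_nonneg_left (by linarith) (by positivity)
    have h2 : (m:ℝ)^2 * (2/(m:ℝ)^2) = 2 := by field_simp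
    linarith
  have hlower : 1/(m:ℝ)^2 ≤ (1 + rr)/(1 - rr) := by
    rw [le_div_iff₀ h1mr]
    have h1 : (1/(m:ℝ)^2) * (1 - rr) ≤ (1/(m:ℝ)^2) * 2 :=
      mul_le_mul_of_nonneg_left (by linarith) (by positivity)
    have h2 : (1/(m:ℝ)^2) * 2 = 2/(m:ℝ)^2 := by ring
    linarith
  have hlogm2 : Real.log ((m:ℝ)^2) = 2 * Real.log m := by
    rw [show ((m:ℝ)^2) = (m:ℝ)^(2:ℕ) by norm_num, Real.log_pow]; push_cast; ring
  have hlow : -(2 * Real.log m) ≤ Real.log ((1 + rr)/(1 - rr)) := by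
    have h := Real.log_le_log (show (0:ℝ) < 1/(m:ℝ)^2 by positivity) hlower
    rw [one_div, Real.log_inv, hlogm2] at h
    linarith
  have hup : Real.log ((1 + rr)/(1 - rr)) ≤ 2 * Real.log m := by
    have h := Real.log_le_log (div_pos h1pr h1mr) hupper
    rwa [hlogm2] at h
  have hlog : |Real.log ((1 + rr)/(1 - rr))| ≤ 2 * Real.log m :=
    abs_le.mpr ⟨hlow, hup⟩
  rw [abs_mul]
  rw [abs_of_nonneg (by norm_num : (0:ℝ) ≤ 1/2)]
  linarith

/-- `lam`, `j`, `r` describe a run of AdaBoost on feature matrix `M`: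
`lam 0 = 0`, and at each round the coordinate `j t` of maximal absolute correlation is
chosen, `r t` is its correlation, and the step is `α_t = ½ ln((1+r_t)/(1−r_t))`. -/
def IsAdaBoost {m N : ℕ} (M : Matrix (Fin m) (Fin N) ℝ)
    (lam : ℕ → Fin N → ℝ) (j : ℕ → Fin N) (r : ℕ → ℝ) : Prop :=
  lam 0 = 0 ∧
  ∀ t : ℕ,
    (∀ j' : Fin N, |∑ i, wt M (lam t) i * M i j'| ≤ |∑ i, wt M (lam t) i * M i (j t)|) ∧
    r t = ∑ i, wt M (lam t) i * M i (j t) ∧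
    lam (t + 1) = lam t + Pi.single (j t) ((1 / 2) * Real.log ((1 + r t) / (1 - r t)))


/-- If the feature matrix has two complementary `{−1,+1}`-valued rows, then the
number of AdaBoost rounds needed to reach loss at most `L*` is at least
`inf{‖λ‖₁ : L(λ) ≤ L*}/(2 ln m)`. -/
theorem adaboost_round_lower_bound_norm {m N : ℕ} (hm : 2 ≤ m)
    (M : Matrix (Fin m) (Fin N) ℝ) (hM : ∀ i j, |M i j| ≤ 1)
    (i₀ i₁ : Fin m) (hne : i₀ ≠ i₁)
    (hpm : ∀ jj : Fin N, M i₀ jj = 1 ∨ M i₀ jj = -1)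
    (hcomp : ∀ jj : Fin N, M i₁ jj = -M i₀ jj)
    (lam : ℕ → Fin N → ℝ) (j : ℕ → Fin N) (r : ℕ → ℝ)
    (hAda : IsAdaBoost M lam j r)
    (hmono : ∀ t : ℕ, expLoss M (lam (t + 1)) ≤ expLoss M (lam t))
    (Lstar : ℝ) (T : ℕ) (hT : expLoss M (lam T) ≤ Lstar) :
    sInf {x : ℝ | ∃ lam' : Fin N → ℝ, expLoss M lam' ≤ Lstar ∧ x = l1 lam'} /
      (2 * Real.log m) ≤ (T : ℝ) := by
  obtain ⟨h0, hstep⟩ := hAda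
  have hm0 : (0:ℝ) < m := by
    have : (2:ℝ) ≤ m := by exact_mod_cast hm
    linarith
  have hloss1 : ∀ t, expLoss M (lam t) ≤ 1 := by
    intro t
    induction t with
    | zero =>
      rw [h0]
      unfold expLoss
      simp only [Matrix.mulVec_zero, Pi.zero_apply, neg_zero, Real.exp_zero, Finset.sum_const,
        Finset.card_univ, Fintype.card_fin, nsmul_eq_mul, mul_one]
      rw [one_div, inv_mul_cancel₀ hm0.ne']
    | succ t ih => exact (hmono t).trans ih
  have hlogm_pos : 0 < Real.log m := Real.log_pos (by exact_mod_cast lt_of_lt_of_le one_lt_two hm)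
  have hl1b : ∀ t : ℕ, l1 (lam t) ≤ t * Real.log m := by
    intro t
    induction t with
    | zero => simp [h0, l1]
    | succ t ih =>
      obtain ⟨_, hrt, hlam⟩ := hstep t
      have halpha := alpha_abs_le hm M hM i₀ i₁ hne hpm hcomp (lam t) (hloss1 t) (j t)
      rw [← hrt] at halpha
      calc l1 (lam (t + 1)) ≤ l1 (lam t) + |(1/2 : ℝ) * Real.log ((1 + r t) / (1 - r t))| := by
            rw [hlam]; exact l1_add_single _ _ _
        _ ≤ t * Real.log m + Real.log m := add_le_add ih halpha
        _ = (↑(t + 1)) * Real.log m := by push_cast; ring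
  have hbdd : BddBelow {x : ℝ | ∃ lam' : Fin N → ℝ, expLoss M lam' ≤ Lstar ∧ x = l1 lam'} := by
    refine ⟨0, fun x hx => ?_⟩
    obtain ⟨l, _, hx⟩ := hx
    rw [hx]
    exact l1_nonneg l
  have hmem : l1 (lam T) ∈ {x : ℝ | ∃ lam' : Fin N → ℝ, expLoss M lam' ≤ Lstar ∧ x = l1 lam'} :=
    ⟨lam T, hT, rfl⟩
  have h1 : sInf {x : ℝ | ∃ lam' : Fin N → ℝ, expLoss M lam' ≤ Lstar ∧ x = l1 lam'} ≤ l1 (lam T) :=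
    csInf_le hbdd hmem
  rw [div_le_iff₀ (by positivity)]
  have hT0 : (0:ℝ) ≤ T := Nat.cast_nonneg T
  nlinarith [hl1b T, h1]
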